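/- If R is a ring such that every simple-direct-projective right R-module is simple-direct-injective, then R is a right max-ring, i.e., every nonzero right R-module has a maximal submodule. -/

import Mathlib

section Defs

variable (R : Type*) [Ring R] (M : Type*) [AddCommGroup M] [Module R M]

/-- `K` is a small (superfluous) submodule of `M`. -/
def SmallSubmodule (K : Submodule R M) : Prop :=
  ∀ N : Submodule R M, K ⊔ N = ⊤ → N = ⊤

/-- `A` is a direct summand of `M`. -/
def IsDirectSummand (A : Submodule R M) : Prop :=
  ∃ B : Submodule R M, IsCompl A B

/-- The socle of `M`: the sum of all simple submodules. -/
def moduleSocle : Submodule R M :=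
  sSup {S : Submodule R M | IsSimpleModule R S}

/-- The (Jacobson) radical of `M`: the intersection of all maximal submodules. -/
def moduleRad : Submodule R M :=
  sInf {S : Submodule R M | IsCoatom S}

/-- `M` is simple-direct-projective. -/
def SimpleDirectProjective : Prop :=
  ∀ A B : Submodule R M, IsSimpleModule R B → Nonempty ((M ⧸ A) ≃ₗ[R] B) →
    IsDirectSummand R M B → IsDirectSummand R M A

/-- `M` is simple-direct-injective. -/
def SimpleDirectInjective : Prop :=
  ∀ A B : Submodule R M, IsSimpleModule R A → IsSimpleModule R B →
    Nonempty (A ≃ₗ[R] B) → IsDirectSummand R M B → IsDirectSummand R M A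

/-- `L` is a coclosed submodule of `M`. -/
def CoclosedSubmodule (L : Submodule R M) : Prop :=
  ∀ K : Submodule R M, K ≤ L →
    SmallSubmodule R (M ⧸ K) (L.map K.mkQ) → K = L

end Defs

/-- The `p`-primary component of an abelian group `M`. -/
def primaryComponent (M : Type*) [AddCommGroup M] (p : ℕ) : Submodule ℤ M :=
  Submodule.torsion' ℤ M (Submonoid.powers (p : ℤ))

theorem aux_hom_eq_zero {R P Q : Type*} [Ring R] [AddCommGroup P] [Module R P]
    [AddCommGroup Q] [Module R Q] (hP : ∀ T : Submodule R P, ¬ IsCoatom T)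
    [IsSimpleModule R Q] (f : P →ₗ[R] Q) : f = 0 := by
  by_contra hf
  have hr : LinearMap.range f = ⊤ := by
    rcases eq_bot_or_eq_top (LinearMap.range f) with h | h
    · exact absurd (LinearMap.range_eq_bot.mp h) hf
    · exact h
  have hsurj : Function.Surjective f := LinearMap.range_eq_top.mp hr
  have : IsSimpleModule R (P ⧸ LinearMap.ker f) :=
    IsSimpleModule.congr (f.quotKerEquivOfSurjective hsurj)
  exact hP _ (isSimpleModule_iff_isCoatom.mp this)

/-- If every simple-direct-projective right `R`-module is simple-direct-injective, then
`R` is a right max-ring: every nonzero module has a maximal submodule. -/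
theorem stmt_19 (R : Type u) [Ring R]
    (h : ∀ (M : Type u) [AddCommGroup M] [Module R M],
      SimpleDirectProjective R M → SimpleDirectInjective R M) :
    ∀ (M : Type u) [AddCommGroup M] [Module R M],
      Nontrivial M → ∃ P : Submodule R M, IsCoatom P := by
  intro M _ _ hM
  by_contra hco
  push_neg at hco
  -- `hco : ∀ P : Submodule R M, ¬ IsCoatom P`
  obtain ⟨x, hx⟩ := exists_ne (0 : M)
  -- Zorn: choose `C` maximal with respect to `x ∉ C`
  obtain ⟨C, -, hCmem, hCmax⟩ :=
    zorn_le_nonempty₀ {C : Submodule R M | x ∉ C}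
      (fun c hcs hchain y hy => by
        refine ⟨sSup c, ?_, fun z hz => le_sSup hz⟩
        intro hmem
        obtain ⟨D, hD, hxD⟩ := (Submodule.mem_sSup_of_directed ⟨y, hy⟩ hchain.directedOn).1 hmem
        exact hcs hD hxD)
      ⊥ (by simpa using hx)
  -- basic facts about `P := M ⧸ C`
  have hker : LinearMap.ker C.mkQ = C := Submodule.ker_mkQ C
  have hrange : LinearMap.range C.mkQ = ⊤ := Submodule.range_mkQ C
  have hxbar : C.mkQ x ≠ 0 := by
    simpa [Submodule.Quotient.mk_eq_zero] using hCmem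
  have hCle : ∀ T : Submodule R (M ⧸ C), C ≤ T.comap C.mkQ := by
    intro T c hc
    show C.mkQ c ∈ T
    rw [show C.mkQ c = 0 from (Submodule.Quotient.mk_eq_zero C).mpr hc]
    exact T.zero_mem
  -- `M ⧸ C` has no coatoms
  have hPco : ∀ T : Submodule R (M ⧸ C), ¬ IsCoatom T := by
    intro T hT
    have hmapT : Submodule.map C.mkQ (T.comap C.mkQ) = T := by
      rw [Submodule.map_comap_eq, hrange, top_inf_eq]
    refine hco (T.comap C.mkQ) ⟨?_, ?_⟩
    · intro htop
      apply hT.1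
      rw [htop, Submodule.map_top, hrange] at hmapT
      exact hmapT.symm
    · intro T' hlt
      have hkle : C ≤ T' := le_trans (hCle T) hlt.le
      have hT'back : Submodule.comap C.mkQ (Submodule.map C.mkQ T') = T' := by
        rw [Submodule.comap_map_eq, hker, sup_eq_left.mpr hkle]
      have hne : Submodule.map C.mkQ T' ≠ T := by
        intro heq
        have : Submodule.comap C.mkQ T = T' := by rw [← heq, hT'back]
        exact hlt.ne this
      have hTle : T ≤ Submodule.map C.mkQ T' := by
        rw [← hmapT]; exact Submodule.map_mono hlt.le
      have htop : Submodule.map C.mkQ T' = ⊤ := hT.2 _ (lt_of_le_of_ne hTle (Ne.symm hne))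
      rw [← hT'back, htop, Submodule.comap_top]
  -- every nonzero submodule of `M ⧸ C` contains `x̄`
  have hxmem : ∀ D : Submodule R (M ⧸ C), D ≠ ⊥ → C.mkQ x ∈ D := by
    intro D hD
    have hkle : C ≤ D.comap C.mkQ := hCle D
    by_contra hxD
    have : D.comap C.mkQ ≤ C := hCmax hxD hkle
    have heq : D.comap C.mkQ = C := le_antisymm this hkle
    apply hD
    have h1 : Submodule.map C.mkQ (D.comap C.mkQ) = D := by
      rw [Submodule.map_comap_eq, hrange, top_inf_eq]
    have h2 : Submodule.map C.mkQ C = ⊥ := by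
      rw [eq_bot_iff]
      refine Submodule.map_le_iff_le_comap.mpr ?_
      rw [Submodule.comap_bot, hker]
    rw [← h1, heq, h2]
  -- the simple submodule `A` of `M ⧸ C`
  set A : Submodule R (M ⧸ C) := Submodule.span R {C.mkQ x} with hAdef
  have hxA : C.mkQ x ∈ A := Submodule.mem_span_singleton_self _
  have hAne : A ≠ ⊥ := fun hbot => hxbar (by rw [hbot] at hxA; simpa using hxA)
  have hAsimple : IsSimpleModule R A := by
    rw [isSimpleModule_iff_isAtom]
    refine ⟨hAne, fun D hDlt => ?_⟩
    by_contra hD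
    exact hDlt.2 (Submodule.span_le.mpr (by simpa using hxmem D hD))
  -- the test module `N`
  set N := (M ⧸ C) × ↥A with hNdef
  have hcompl : IsCompl (Submodule.fst R (M ⧸ C) ↥A) (Submodule.snd R (M ⧸ C) ↥A) := by
    constructor
    · rw [disjoint_iff]; exact Submodule.fst_inf_snd R (M ⧸ C) ↥A
    · rw [codisjoint_iff]; exact Submodule.fst_sup_snd R (M ⧸ C) ↥A
  have hsndsimple : IsSimpleModule R ↥(Submodule.snd R (M ⧸ C) ↥A) := by
    letI := hAsimple
    exact IsSimpleModule.congr (Submodule.sndEquiv R (M ⧸ C) ↥A)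
  have hfstcoatom : IsCoatom (Submodule.fst R (M ⧸ C) ↥A) := by
    rw [← isSimpleModule_iff_isCoatom]
    letI := hsndsimple
    exact IsSimpleModule.congr (N := ↥(Submodule.snd R (M ⧸ C) ↥A)) (Submodule.quotientEquivOfIsCompl _ _ hcompl)
  have hfst_le : ∀ T : Submodule R N, IsCoatom T → Submodule.fst R (M ⧸ C) ↥A ≤ T := by
    intro T hT
    letI : IsSimpleModule R (N ⧸ T) := isSimpleModule_iff_isCoatom.mpr hT
    have hzero : T.mkQ.comp (LinearMap.inl R (M ⧸ C) ↥A) = 0 :=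
      aux_hom_eq_zero hPco _
    rintro ⟨p, a⟩ hmem
    have ha : a = 0 := by
      simpa [Submodule.fst] using hmem
    subst ha
    have : T.mkQ ((p, 0) : N) = 0 := by
      have := congrFun (congrArg DFunLike.coe hzero) p
      exact this
    simpa [Submodule.Quotient.mk_eq_zero] using this
  have hcoatom_eq : ∀ T : Submodule R N, IsCoatom T → T = Submodule.fst R (M ⧸ C) ↥A := by
    intro T hT
    rcases lt_or_eq_of_le (hfst_le T hT) with hlt | heq
    · exact absurd (hfstcoatom.2 _ hlt) hT.1
    · exact heq.symm
  -- `N` is simple-direct-projective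
  have hSDP : SimpleDirectProjective R N := by
    intro A' B' hB' ⟨e⟩ _
    letI := hB'
    have hA'co : IsCoatom A' := isSimpleModule_iff_isCoatom.mp (IsSimpleModule.congr (N := ↥B') e)
    rw [hcoatom_eq A' hA'co]
    exact ⟨_, hcompl⟩
  -- hence `N` is simple-direct-injective
  have hSDI := h N hSDP
  -- apply it to `A × 0` and `0 × A`
  set A'' : Submodule R N := A.map (LinearMap.inl R (M ⧸ C) ↥A) with hA''def
  have hA''equiv : A'' ≃ₗ[R] ↥A :=
    (Submodule.equivMapOfInjective _ (LinearMap.inl_injective) A).symm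
  have hA''simple : IsSimpleModule R ↥A'' := by
    letI := hAsimple
    exact IsSimpleModule.congr hA''equiv
  obtain ⟨Cc, hCc⟩ := hSDI A'' (Submodule.snd R (M ⧸ C) ↥A) hA''simple hsndsimple
    ⟨hA''equiv.trans (Submodule.sndEquiv R (M ⧸ C) ↥A).symm⟩ ⟨_, hcompl.symm⟩
  have hCcco : IsCoatom Cc := by
    rw [← isSimpleModule_iff_isCoatom]
    letI := hA''simple
    exact IsSimpleModule.congr (N := ↥A'') (Submodule.quotientEquivOfIsCompl _ _ hCc.symm)
  have hCcfst : Cc = Submodule.fst R (M ⧸ C) ↥A := hcoatom_eq _ hCcco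
  have hA''le : A'' ≤ Cc := by
    rw [hCcfst]
    rintro y ⟨m, hm, rfl⟩
    simp only [Submodule.fst, Submodule.mem_comap, Submodule.mem_bot]
    rfl
  have hA''bot : A'' = ⊥ := by
    have := hCc.disjoint
    rw [disjoint_iff] at this
    rw [← this, inf_eq_left.mpr hA''le]
  apply hxbar
  have : ((C.mkQ x, 0) : N) ∈ A'' := ⟨C.mkQ x, hxA, rfl⟩
  rw [hA''bot] at this
  simpa [Prod.ext_iff] using this
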